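/- Let (G,≾) be a compatible quasi-ordered abelian group and define g ≼ h iff there exist nonzero integers n, m with 0 ≾ ng ≾ mh. Then the restriction of ≼ to the subgroup G^o of o-type elements is a valuational quasi-order on G^o: it is reflexive and transitive, and it satisfies 0 is strictly maximal (g ≼ 0 → g = 0 for g ∈ G^o), g ≼ −g ≼ g for all g ∈ G^o, and the ultrametric inequality g ≼ h ⇒ g + h ≼ h for g, h ∈ G^o. -/

import Mathlib

universe u

variable {G : Type u} [AddCommGroup G]

/-- `r` is a total quasi-order: reflexive, transitive, any two elements comparable. -/
def TotalQO (r : G → G → Prop) : Prop :=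
  (∀ x, r x x) ∧ (∀ x y z, r x y → r y z → r x z) ∧ (∀ x y, r x y ∨ r y x)

/-- Axiom (Q1): `x ∼ 0 → x = 0`. -/
def AxQ1 (r : G → G → Prop) : Prop := ∀ x, r x 0 → r 0 x → x = 0

/-- Axiom (Q2): `x ≾ y ∧ ¬(y ∼ z) → x + z ≾ y + z`. -/
def AxQ2 (r : G → G → Prop) : Prop :=
  ∀ x y z, r x y → ¬(r y z ∧ r z y) → r (x + z) (y + z)

/-- A compatible quasi-ordered abelian group: a total quasi-order satisfying (Q1) and (Q2). -/
def Compatible (r : G → G → Prop) : Prop := TotalQO r ∧ AxQ1 r ∧ AxQ2 r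

/-- `g` is o-type: its `∼`-class is a singleton and `g` does not have order 2. -/
def OType (r : G → G → Prop) (g : G) : Prop :=
  (∀ h, r h g → r g h → h = g) ∧ (g + g = 0 → g = 0)

/-- `g` is v-type: its `∼`-class is not a singleton, or `g + g = 0`. -/
def VType (r : G → G → Prop) (g : G) : Prop :=
  (∃ h, h ≠ g ∧ r h g ∧ r g h) ∨ g + g = 0

/-- The relation `g ≼ h ↔ ∃ n m ≠ 0, 0 ≾ n•g ≾ m•h`. -/
def Preqo (r : G → G → Prop) (g h : G) : Prop :=
  ∃ n m : ℤ, n ≠ 0 ∧ m ≠ 0 ∧ r 0 (n • g) ∧ r (n • g) (m • h)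

section Aux

variable {r : G → G → Prop}

lemma aux_refl (hc : Compatible r) : ∀ x, r x x := hc.1.1
lemma aux_trans (hc : Compatible r) {x y z : G} (h1 : r x y) (h2 : r y z) : r x z :=
  hc.1.2.1 x y z h1 h2
lemma aux_total (hc : Compatible r) : ∀ x y, r x y ∨ r y x := hc.1.2.2
lemma aux_q1 (hc : Compatible r) : ∀ x : G, r x 0 → r 0 x → x = 0 := hc.2.1
lemma aux_q2 (hc : Compatible r) : AxQ2 r := hc.2.2

def AuxPos (r : G → G → Prop) (g : G) : Prop := r 0 g ∧ ¬ r g 0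
def AuxNeg (r : G → G → Prop) (g : G) : Prop := r g 0 ∧ ¬ r 0 g

lemma aux_L1 (hc : Compatible r) {x : G} (h : r x 0) : r 0 (-x) := by
  by_cases hs : r 0 (-x) ∧ r (-x) 0
  · exact hs.1
  · have := aux_q2 hc x 0 (-x) h hs
    simpa using this

lemma aux_pos_of_neg (hc : Compatible r) {g : G} (h : AuxNeg r g) : AuxPos r (-g) :=
  ⟨aux_L1 hc h.1, fun hx => h.2 (by simpa using aux_L1 hc hx)⟩

lemma aux_L2 (hc : Compatible r) {g : G} (hg : OType r g) (h : r 0 g) : r (-g) 0 := by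
  by_cases h2 : r g (-g) ∧ r (-g) g
  · have e : -g = g := hg.1 (-g) h2.2 h2.1
    have g0 : g = 0 := hg.2 (by nth_rewrite 1 [← e]; exact neg_add_cancel g)
    rw [g0, neg_zero]; exact aux_refl hc 0
  · have := aux_q2 hc 0 g (-g) h h2
    simpa using this

lemma aux_neg_of_pos (hc : Compatible r) {g : G} (hg : OType r g) (h : AuxPos r g) :
    AuxNeg r (-g) := by
  refine ⟨aux_L2 hc hg h.1, fun hx => ?_⟩
  have h0 : -g = 0 := aux_q1 hc _ (aux_L2 hc hg h.1) hx
  have hg0 : g = 0 := neg_eq_zero.mp h0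
  exact h.2 (by rw [hg0]; exact aux_refl hc 0)

lemma aux_tri (hc : Compatible r) (g : G) : g = 0 ∨ AuxPos r g ∨ AuxNeg r g := by
  by_cases h1 : r g 0 <;> by_cases h2 : r 0 g
  · exact Or.inl (aux_q1 hc g h1 h2)
  · exact Or.inr (Or.inr ⟨h1, h2⟩)
  · exact Or.inr (Or.inl ⟨h2, h1⟩)
  · rcases aux_total hc g 0 with h | h
    · exact absurd h h1
    · exact absurd h h2

lemma aux_otype_zero (hc : Compatible r) : OType r (0 : G) :=
  ⟨fun h h1 h2 => aux_q1 hc h h1 h2, fun _ => rfl⟩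

lemma aux_otype_neg (hc : Compatible r) {g : G} (hg : OType r g) : OType r (-g) := by
  constructor
  · intro h h1 h2
    by_cases hg0 : g = 0
    · subst hg0
      simp only [neg_zero] at h1 h2 ⊢
      exact aux_q1 hc h h1 h2
    · have hne : ¬ (r (-g) g ∧ r g (-g)) := by
        rintro ⟨a, b⟩
        have e : -g = g := hg.1 (-g) a b
        exact hg0 (hg.2 (by nth_rewrite 1 [← e]; exact neg_add_cancel g))
      have e1 : r (h + g) 0 := by
        have := aux_q2 hc h (-g) g h1 hne
        simpa using this
      have e2 : r 0 (h + g) := by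
        have hne2 : ¬ (r h g ∧ r g h) := by
          rintro ⟨a, b⟩
          have e : h = g := hg.1 h a b
          subst e
          exact hne ⟨h2, h1⟩
        have := aux_q2 hc (-g) h g h2 hne2
        simpa using this
      have : h + g = 0 := aux_q1 hc _ e1 e2
      exact eq_neg_of_add_eq_zero_left this
  · intro h2t
    have e : g + g = 0 := by
      have : -(g + g) = 0 := by rw [neg_add]; exact h2t
      exact neg_eq_zero.mp this
    have := hg.2 e
    rw [this, neg_zero]

lemma aux_NEGz (hc : Compatible r) {g : G} (h : AuxNeg r g) :
    ∀ a : ℤ, 1 ≤ a → AuxNeg r (a • g) := by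
  intro a ha
  refine Int.le_induction (motive := fun b _ => AuxNeg r (b • g)) ?_ ?_ a ha
  · simpa using h
  · intro n hn ih
    have hcond : ¬ (r 0 (n • g) ∧ r (n • g) 0) := fun hh => ih.2 hh.1
    have step := aux_q2 hc g 0 (n • g) h.1 hcond
    rw [zero_add] at step
    have e : g + n • g = (n + 1) • g := by rw [add_zsmul, one_zsmul, add_comm]
    rw [e] at step
    exact ⟨aux_trans hc step ih.1, fun h0 => ih.2 (aux_trans hc h0 step)⟩

lemma aux_POSz (hc : Compatible r) {g : G} (hg : OType r g) (h : AuxPos r g) :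
    ∀ a : ℤ, 1 ≤ a → AuxPos r (a • g) := by
  intro a ha
  have h1 := aux_NEGz hc (aux_neg_of_pos hc hg h) a ha
  rw [smul_neg] at h1
  simpa using aux_pos_of_neg hc h1

lemma aux_smul_negz (hc : Compatible r) {g : G} (hg : OType r g) (hp : AuxPos r g)
    {a : ℤ} (ha : a < 0) : AuxNeg r (a • g) := by
  have h1 := aux_NEGz hc (aux_neg_of_pos hc hg hp) (-a) (by omega)
  have e : (-a) • (-g) = a • g := by rw [smul_neg, neg_zsmul, neg_neg]
  rwa [e] at h1

lemma aux_torsion (hc : Compatible r) {g : G} (hg : OType r g) {n : ℤ}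
    (hn : n ≠ 0) (h : n • g = 0) : g = 0 := by
  rcases aux_tri hc g with h0 | hp | hng
  · exact h0
  · rcases lt_trichotomy n 0 with h1 | h1 | h1
    · have := aux_smul_negz hc hg hp h1
      rw [h] at this; exact absurd (aux_refl hc 0) this.2
    · exact absurd h1 hn
    · have := aux_POSz hc hg hp n (by omega)
      rw [h] at this; exact absurd (aux_refl hc 0) this.2
  · have hg' := aux_otype_neg hc hg
    have hp' := aux_pos_of_neg hc hng
    have h' : n • (-g) = 0 := by rw [smul_neg, h, neg_zero]
    rcases lt_trichotomy n 0 with h1 | h1 | h1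
    · have := aux_smul_negz hc hg' hp' h1
      rw [h'] at this; exact absurd (aux_refl hc 0) this.2
    · exact absurd h1 hn
    · have := aux_POSz hc hg' hp' n (by omega)
      rw [h'] at this; exact absurd (aux_refl hc 0) this.2

lemma aux_otype_zsmul_of_pos (hc : Compatible r) {g : G} (hg : OType r g)
    (hp : AuxPos r g) : ∀ a : ℤ, 1 ≤ a → OType r (a • g) := by
  intro a ha
  refine Int.le_induction (motive := fun b _ => OType r (b • g)) ?_ ?_ a ha
  · simpa using hg
  · intro n hn ih
    have hgneg : OType r (-g) := aux_otype_neg hc hg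
    have hnegg : AuxNeg r (-g) := aux_neg_of_pos hc hg hp
    have posn1 : AuxPos r ((n + 1) • g) := aux_POSz hc hg hp (n + 1) (by omega)
    have hcond : ¬ (r ((n + 1) • g) (-g) ∧ r (-g) ((n + 1) • g)) := by
      rintro ⟨a1, _⟩
      exact posn1.2 (aux_trans hc a1 hnegg.1)
    constructor
    · intro x h1 h2
      have e1 : r (x + -g) (n • g) := by
        have := aux_q2 hc x ((n + 1) • g) (-g) h1 hcond
        rwa [add_zsmul, one_zsmul, add_neg_cancel_right] at this
      have hcond2 : ¬ (r x (-g) ∧ r (-g) x) := by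
        rintro ⟨a1, b1⟩
        have hx : x = -g := hgneg.1 x a1 b1
        subst hx
        exact hcond ⟨h2, h1⟩
      have e2 : r (n • g) (x + -g) := by
        have := aux_q2 hc ((n + 1) • g) x (-g) h2 hcond2
        rwa [add_zsmul, one_zsmul, add_neg_cancel_right] at this
      have key : x + -g = n • g := ih.1 (x + -g) e1 e2
      rw [add_zsmul, one_zsmul, ← key]; abel
    · intro hh
      rw [← add_zsmul] at hh
      have g0 : g = 0 := aux_torsion hc hg (by omega) hh
      rw [g0, smul_zero]

lemma aux_otype_zsmul (hc : Compatible r) {g : G} (hg : OType r g) (n : ℤ) :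
    OType r (n • g) := by
  rcases aux_tri hc g with h0 | hp | hn
  · rw [h0, smul_zero]; exact aux_otype_zero hc
  · rcases lt_trichotomy n 0 with h1 | h1 | h1
    · have := aux_otype_zsmul_of_pos hc hg hp (-n) (by omega)
      have e : n • g = -((-n) • g) := by rw [neg_zsmul, neg_neg]
      rw [e]; exact aux_otype_neg hc this
    · rw [h1, zero_zsmul]; exact aux_otype_zero hc
    · exact aux_otype_zsmul_of_pos hc hg hp n (by omega)
  · have hg' := aux_otype_neg hc hg
    have hp' := aux_pos_of_neg hc hn
    have e : n • g = (-n) • (-g) := by rw [smul_neg, neg_zsmul, neg_neg]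
    rw [e]
    rcases lt_trichotomy n 0 with h1 | h1 | h1
    · exact aux_otype_zsmul_of_pos hc hg' hp' (-n) (by omega)
    · rw [h1, neg_zero, zero_zsmul]; exact aux_otype_zero hc
    · have := aux_otype_zsmul_of_pos hc hg' hp' n (by omega)
      have e2 : (-n) • (-g) = -(n • (-g)) := neg_zsmul _ _
      rw [e2]; exact aux_otype_neg hc this

lemma aux_diag (hc : Compatible r) {x y : G} (hy : OType r y) (hxy : r x y) :
    r (x + y) (y + y) := by
  rcases aux_total hc (x + y) (y + y) with hgoal | hrev
  · exact hgoal
  · by_cases hcond : r (x + y) (-y) ∧ r (-y) (x + y)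
    · have e : x + y = -y := (aux_otype_neg hc hy).1 _ hcond.1 hcond.2
      rcases aux_tri hc y with h0 | hp | hn
      · rw [h0] at hxy ⊢; simpa using hxy
      · rw [e]
        have p2 : AuxPos r ((2 : ℤ) • y) := aux_POSz hc hy hp 2 (by norm_num)
        have hn2 : r (-y) 0 := aux_L2 hc hy hp.1
        have := aux_trans hc hn2 p2.1
        rwa [two_zsmul] at this
      · have hg' := aux_otype_neg hc hy
        have hp' := aux_pos_of_neg hc hn
        have px : AuxPos r ((2 : ℤ) • (-y)) := aux_POSz hc hg' hp' 2 (by norm_num)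
        have ex : (2 : ℤ) • (-y) = x := by
          have hx : x = -y - y := eq_sub_of_add_eq e
          rw [hx, two_zsmul]; abel
        rw [ex] at px
        exact absurd (aux_trans hc hxy hn.1) px.2
    · have step := aux_q2 hc (y + y) (x + y) (-y) hrev hcond
      rw [add_neg_cancel_right, add_neg_cancel_right] at step
      have hxeq : x = y := hy.1 x hxy step
      rw [hxeq]
      exact aux_refl hc _

lemma aux_tadd (hc : Compatible r) {x y z : G} (hxy : r x y) (hy : OType r y)
    (hz : OType r z) : r (x + z) (y + z) := by
  by_cases hcond : r y z ∧ r z y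
  · have e : y = z := hz.1 y hcond.1 hcond.2
    subst e
    exact aux_diag hc hy hxy
  · exact aux_q2 hc x y z hxy hcond

lemma aux_mono (hc : Compatible r) {x y x' y' : G} (h1 : r x y) (h2 : r x' y')
    (hy : OType r y) (hx' : OType r x') (hy' : OType r y') : r (x + x') (y + y') := by
  have a := aux_tadd hc h1 hy hx'
  have b := aux_tadd hc h2 hy' hy
  refine aux_trans hc a ?_
  rw [add_comm y x', add_comm y y']
  exact b

lemma aux_scale (hc : Compatible r) {u v : G} (h : r u v) (hu : OType r u)
    (hv : OType r v) : ∀ a : ℤ, 1 ≤ a → r (a • u) (a • v) := by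
  intro a ha
  refine Int.le_induction (motive := fun b _ => r (b • u) (b • v)) ?_ ?_ a ha
  · simpa using h
  · intro n hn ih
    have := aux_mono hc ih h (aux_otype_zsmul hc hv n) hu hv
    rw [add_zsmul, add_zsmul, one_zsmul, one_zsmul]
    exact this

lemma aux_sign (hc : Compatible r) {g : G} (hg : OType r g) (hgne : g ≠ 0) {a : ℤ}
    (ha : a ≠ 0) (hp : AuxPos r (a • g)) :
    (AuxPos r g ∧ 0 < a) ∨ (AuxNeg r g ∧ a < 0) := by
  rcases aux_tri hc g with h0 | hpg | hng
  · exact absurd h0 hgne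
  · left; refine ⟨hpg, ?_⟩
    rcases lt_trichotomy a 0 with h | h | h
    · exact absurd (aux_smul_negz hc hg hpg h).1 hp.2
    · exact absurd h ha
    · exact h
  · right; refine ⟨hng, ?_⟩
    rcases lt_trichotomy a 0 with h | h | h
    · exact h
    · exact absurd h ha
    · exact absurd (aux_NEGz hc hng a (by omega)).1 hp.2

lemma aux_preqo_refl (hc : Compatible r) (g : G) : Preqo r g g := by
  rcases aux_tri hc g with h0 | hp | hn
  · exact ⟨1, 1, one_ne_zero, one_ne_zero,
      by rw [h0, smul_zero]; exact aux_refl hc 0, aux_refl hc _⟩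
  · exact ⟨1, 1, one_ne_zero, one_ne_zero, by rw [one_zsmul]; exact hp.1, aux_refl hc _⟩
  · refine ⟨-1, -1, by norm_num, by norm_num, ?_, aux_refl hc _⟩
    have := (aux_pos_of_neg hc hn).1
    rw [neg_zsmul, one_zsmul]
    exact this

end Aux

/-- in a compatible q.o.a.g, the relation
`g ≼ h ↔ ∃ n m ≠ 0, 0 ≾ n•g ≾ m•h` restricted to the subgroup `G^o` of
o-type elements is a valuational quasi-order: reflexive, transitive, with `0`
strictly maximal, `g ≼ -g ≼ g`, and the ultrametric inequality
`g ≼ h → g + h ≼ h`. -/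
theorem preqo_valuational_on_otype (r : G → G → Prop) (hc : Compatible r) :
    (∀ g : G, OType r g → Preqo r g g) ∧
    (∀ f g h : G, OType r f → OType r g → OType r h →
      Preqo r f g → Preqo r g h → Preqo r f h) ∧
    (∀ g : G, OType r g → Preqo r g 0 → g = 0) ∧
    (∀ g : G, OType r g → (Preqo r g (-g) ∧ Preqo r (-g) g)) ∧
    (∀ g h : G, OType r g → OType r h → Preqo r g h → Preqo r (g + h) h) := by
  refine ⟨fun g _ => aux_preqo_refl hc g, ?_, ?_, ?_, ?_⟩
  · -- transitivity
    rintro f g h hf hg hh ⟨n1, m1, hn1, hm1, hA, hB⟩ ⟨n2, m2, hn2, hm2, hC, hD⟩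
    by_cases hf0 : f = 0
    · subst hf0
      refine ⟨1, m2, one_ne_zero, hm2, by simpa using aux_refl hc (0 : G), ?_⟩
      have : r 0 (m2 • h) := aux_trans hc hC hD
      simpa using this
    · by_cases hg0 : g = 0
      · exfalso
        have hB' : r (n1 • f) 0 := by rw [hg0] at hB; simpa using hB
        have : n1 • f = 0 := aux_q1 hc _ hB' hA
        exact hf0 (aux_torsion hc hf hn1 this)
      · by_cases hh0 : h = 0
        · exfalso
          have hD' : r (n2 • g) 0 := by rw [hh0] at hD; simpa using hD
          have : n2 • g = 0 := aux_q1 hc _ hD' hC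
          exact hg0 (aux_torsion hc hg hn2 this)
        · have pf : AuxPos r (n1 • f) :=
            ⟨hA, fun h0 => hf0 (aux_torsion hc hf hn1 (aux_q1 hc _ h0 hA))⟩
          have pg1 : AuxPos r (m1 • g) :=
            ⟨aux_trans hc hA hB,
             fun h0 => hg0 (aux_torsion hc hg hm1 (aux_q1 hc _ h0 (aux_trans hc hA hB)))⟩
          have pg2 : AuxPos r (n2 • g) :=
            ⟨hC, fun h0 => hg0 (aux_torsion hc hg hn2 (aux_q1 hc _ h0 hC))⟩
          have s1 := aux_sign hc hg hg0 hm1 pg1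
          have s2 := aux_sign hc hg hg0 hn2 pg2
          have hsign : (0 < m1 ∧ 0 < n2) ∨ (m1 < 0 ∧ n2 < 0) := by
            rcases s1 with ⟨p1, a⟩ | ⟨q1, a⟩ <;> rcases s2 with ⟨p2, b⟩ | ⟨q2, b⟩
            · exact Or.inl ⟨a, b⟩
            · exact absurd q2.1 p1.2
            · exact absurd q1.1 p2.2
            · exact Or.inr ⟨a, b⟩
          have hk : (1 : ℤ) ≤ (n2.natAbs : ℤ) := by omega
          have hl : (1 : ℤ) ≤ (m1.natAbs : ℤ) := by omega
          have key : (n2.natAbs : ℤ) * m1 = (m1.natAbs : ℤ) * n2 := by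
            rcases hsign with ⟨a, b⟩ | ⟨a, b⟩
            · have e1 : (n2.natAbs : ℤ) = n2 := by omega
              have e2 : (m1.natAbs : ℤ) = m1 := by omega
              rw [e1, e2, mul_comm]
            · have e1 : (n2.natAbs : ℤ) = -n2 := by omega
              have e2 : (m1.natAbs : ℤ) = -m1 := by omega
              rw [e1, e2]; ring
          refine ⟨(n2.natAbs : ℤ) * n1, (m1.natAbs : ℤ) * m2,
            mul_ne_zero (by omega) hn1, mul_ne_zero (by omega) hm2, ?_, ?_⟩
          · have : AuxPos r ((n2.natAbs : ℤ) • (n1 • f)) :=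
              aux_POSz hc (aux_otype_zsmul hc hf n1) pf _ hk
            rw [mul_smul]
            exact this.1
          · rw [mul_smul, mul_smul]
            have t1 : r ((n2.natAbs : ℤ) • (n1 • f)) ((n2.natAbs : ℤ) • (m1 • g)) :=
              aux_scale hc hB (aux_otype_zsmul hc hf n1) (aux_otype_zsmul hc hg m1) _ hk
            have t2 : r ((m1.natAbs : ℤ) • (n2 • g)) ((m1.natAbs : ℤ) • (m2 • h)) :=
              aux_scale hc hD (aux_otype_zsmul hc hg n2) (aux_otype_zsmul hc hh m2) _ hl
            have emid : (n2.natAbs : ℤ) • (m1 • g) = (m1.natAbs : ℤ) • (n2 • g) := by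
              rw [← mul_smul, ← mul_smul, key]
            rw [emid] at t1
            exact aux_trans hc (aux_trans hc t1 t2) (aux_refl hc _)
  · -- 0 strictly maximal
    rintro g hg ⟨n, m, hn, hm, h1, h2⟩
    have h2' : r (n • g) 0 := by simpa using h2
    exact aux_torsion hc hg hn (aux_q1 hc _ h2' h1)
  · -- g ≼ -g ≼ g
    intro g hg
    rcases aux_tri hc g with h0 | hp | hn
    · subst h0
      constructor <;>
        exact ⟨1, 1, one_ne_zero, one_ne_zero, by simpa using aux_refl hc (0 : G),
          by simpa using aux_refl hc (0 : G)⟩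
    · constructor
      · refine ⟨1, -1, one_ne_zero, by norm_num, by simpa using hp.1, ?_⟩
        have e : (-1 : ℤ) • (-g) = g := by simp
        rw [e, one_zsmul]
        exact aux_refl hc g
      · refine ⟨-1, 1, by norm_num, one_ne_zero, ?_, ?_⟩
        · have e : (-1 : ℤ) • (-g) = g := by simp
          rw [e]; exact hp.1
        · have e : (-1 : ℤ) • (-g) = g := by simp
          rw [e, one_zsmul]; exact aux_refl hc g
    · have hpn := aux_pos_of_neg hc hn
      constructor
      · refine ⟨-1, 1, by norm_num, one_ne_zero, ?_, ?_⟩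
        · have e : (-1 : ℤ) • g = -g := by simp
          rw [e]; exact hpn.1
        · have e : (-1 : ℤ) • g = -g := by simp
          rw [e, one_zsmul]; exact aux_refl hc (-g)
      · refine ⟨1, -1, one_ne_zero, by norm_num, ?_, ?_⟩
        · rw [one_zsmul]; exact hpn.1
        · have e : (-1 : ℤ) • g = -g := by simp
          rw [e, one_zsmul]; exact aux_refl hc (-g)
  · -- ultrametric
    rintro g h hg hh ⟨n, m, hn, hm, h1, h2⟩
    by_cases hg0 : g = 0
    · subst hg0
      rw [zero_add]
      exact aux_preqo_refl hc h
    · by_cases hh0 : h = 0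
      · exfalso
        have h2' : r (n • g) 0 := by rw [hh0] at h2; simpa using h2
        exact hg0 (aux_torsion hc hg hn (aux_q1 hc _ h2' h1))
      · have png : AuxPos r (n • g) :=
          ⟨h1, fun h0 => hg0 (aux_torsion hc hg hn (aux_q1 hc _ h0 h1))⟩
        have pmh : AuxPos r (m • h) :=
          ⟨aux_trans hc h1 h2,
           fun h0 => hh0 (aux_torsion hc hh hm (aux_q1 hc _ h0 (aux_trans hc h1 h2)))⟩
        have upper : r (n • (g + h)) ((m + n) • h) := by
          have := aux_tadd hc h2 (aux_otype_zsmul hc hh m) (aux_otype_zsmul hc hh n)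
          rw [smul_add, add_zsmul]
          exact this
        by_cases hr : r (n • (g + h)) 0
        · by_cases hr2 : r 0 (n • (g + h))
          · have hs0 : n • (g + h) = 0 := aux_q1 hc _ hr hr2
            exact ⟨n, m, hn, hm, by rw [hs0]; exact aux_refl hc 0,
              by rw [hs0]; exact pmh.1⟩
          · have hposns : AuxPos r (-(n • (g + h))) := aux_pos_of_neg hc ⟨hr, hr2⟩
            refine ⟨-n, -n, neg_ne_zero.mpr hn, neg_ne_zero.mpr hn, ?_, ?_⟩
            · rw [neg_zsmul]; exact hposns.1
            · have hx : r ((-n) • g) 0 := by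
                have := aux_L2 hc (aux_otype_zsmul hc hg n) png.1
                rwa [← neg_zsmul] at this
              have := aux_mono hc hx (aux_refl hc ((-n) • h)) (aux_otype_zero hc)
                (aux_otype_zsmul hc hh (-n)) (aux_otype_zsmul hc hh (-n))
              rw [zero_add] at this
              rw [smul_add]
              exact this
        · have h0s : r 0 (n • (g + h)) := (aux_total hc (n • (g + h)) 0).resolve_left hr
          have hmn : m + n ≠ 0 := by
            intro hmn0
            rw [hmn0, zero_zsmul] at upper
            exact hr upper
          exact ⟨n, m + n, hn, hmn, h0s, upper⟩
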